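/- Let A > 0, T > 0 and let q, ψ₁ be continuous functions with |q(y)| ≤ A for y ∈ [0,T] and |ψ₁(y,t)| ≤ A on the triangle Δ_T. Suppose continuous functions ψ̃₁, ψ̃₂ on Δ_T and q̃ on [0,T] satisfy the integral inequalities |ψ̃₁(y,t)| ≤ ∫₀^y |ψ̃₂(η, t+η-y)| dη, |ψ̃₂(y,t)| ≤ 2A∫₀^y |ψ̃₁(η, t-η+y)| dη + A∫₀^y |q̃(η)| dη + ε, and |q̃(y)| ≤ 4A∫₀^y |q̃(η)| dη + 2A∫₀^y |ψ̃₁(η, 2y-η)| dη + 2ε for some ε > 0. Then with C = 6A·max(1, 2T), the bounds ‖q̃‖_∞ ≤ 6e^{CT}ε, ‖ψ̃₂‖_∞ ≤ 6e^{CT}ε, and ‖ψ̃₁‖_∞ ≤ 6T·e^{CT}ε hold. -/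

import Mathlib

open Set MeasureTheory intervalIntegral

noncomputable def gfun (ε M C : ℝ) (n : ℕ) (y : ℝ) : ℝ :=
  4*ε * ∑ k ∈ Finset.range n, (C*y)^k / (k.factorial : ℝ) + M * (C*y)^n / (n.factorial : ℝ)

lemma gcont (ε M C : ℝ) (n : ℕ) : Continuous (gfun ε M C n) := by
  unfold gfun
  exact ((continuous_const.mul (continuous_finset_sum _ (fun k _ =>
    ((continuous_const.mul continuous_id).pow k).div_const _))).add
    ((continuous_const.mul ((continuous_const.mul continuous_id).pow n)).div_const _))

lemma gnonneg (ε M C : ℝ) (hε : 0 ≤ ε) (hM : 0 ≤ M) (hC : 0 ≤ C) (n : ℕ) (y : ℝ)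
    (hy : 0 ≤ y) : 0 ≤ gfun ε M C n y := by
  have hx : 0 ≤ C * y := mul_nonneg hC hy
  unfold gfun; positivity

lemma gmono (ε M C : ℝ) (hε : 0 ≤ ε) (hM : 0 ≤ M) (hC : 0 ≤ C) (n : ℕ) (a b : ℝ)
    (ha : 0 ≤ a) (hab : a ≤ b) : gfun ε M C n a ≤ gfun ε M C n b := by
  have h1 : 0 ≤ C * a := mul_nonneg hC ha
  have h2 : C * a ≤ C * b := mul_le_mul_of_nonneg_left hab hC
  unfold gfun
  gcongr

lemma gfour (ε M C : ℝ) (hε : 0 ≤ ε) (hM : 0 ≤ M) (hC : 0 ≤ C) (n : ℕ) (y : ℝ)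
    (hy : 0 ≤ y) : 4*ε ≤ gfun ε M C (n+1) y := by
  have hx : 0 ≤ C * y := mul_nonneg hC hy
  have h1 : (1:ℝ) ≤ ∑ k ∈ Finset.range (n+1), (C*y)^k / (k.factorial : ℝ) := by
    have hm : (0:ℕ) ∈ Finset.range (n+1) := Finset.mem_range.mpr (Nat.succ_pos n)
    have := Finset.single_le_sum (f := fun k => (C*y)^k / (k.factorial : ℝ))
      (fun k _ => by positivity) hm
    simpa using this
  have h2 : 0 ≤ M * (C*y)^(n+1) / ((n+1).factorial : ℝ) := by positivity
  unfold gfun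
  nlinarith

lemma gint (ε M C : ℝ) (n : ℕ) (y : ℝ) :
    C * ∫ ξ in (0:ℝ)..y, gfun ε M C n ξ = gfun ε M C (n+1) y - 4*ε := by
  have hterm : ∀ k : ℕ, C * ∫ ξ in (0:ℝ)..y, (C*ξ)^k / (k.factorial : ℝ)
      = (C*y)^(k+1) / ((k+1).factorial : ℝ) := by
    intro k
    have hfac : ((k.factorial : ℝ)) ≠ 0 := Nat.cast_ne_zero.mpr k.factorial_ne_zero
    have heq : (fun ξ : ℝ => (C*ξ)^k / (k.factorial : ℝ))
        = fun ξ : ℝ => (C^k / (k.factorial : ℝ)) * ξ^k := by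
      funext ξ; rw [mul_pow]; ring
    rw [heq, intervalIntegral.integral_const_mul, integral_pow, Nat.factorial_succ, mul_pow]
    push_cast
    field_simp
    ring
  have hic : ∀ k : ℕ, IntervalIntegrable (fun ξ : ℝ => (C*ξ)^k / (k.factorial : ℝ))
      volume 0 y := fun k =>
    (((continuous_const.mul continuous_id).pow k).div_const _).intervalIntegrable 0 y
  have key : ∫ ξ in (0:ℝ)..y, gfun ε M C n ξ
      = 4*ε * ∑ k ∈ Finset.range n, (∫ ξ in (0:ℝ)..y, (C*ξ)^k / (k.factorial : ℝ))
        + M * ∫ ξ in (0:ℝ)..y, (C*ξ)^n / (n.factorial : ℝ) := by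
    unfold gfun
    rw [intervalIntegral.integral_add, intervalIntegral.integral_const_mul,
      intervalIntegral.integral_finset_sum (fun k _ => hic k)]
    · congr 1
      have : (fun ξ : ℝ => M * (C*ξ)^n / (n.factorial : ℝ))
          = fun ξ : ℝ => M * ((C*ξ)^n / (n.factorial : ℝ)) := by funext ξ; ring
      rw [this, intervalIntegral.integral_const_mul]
    · exact (continuous_const.mul (continuous_finset_sum _ (fun k _ =>
        ((continuous_const.mul continuous_id).pow k).div_const _))).intervalIntegrable 0 y
    · exact ((continuous_const.mul ((continuous_const.mul continuous_id).pow n)).div_const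
        _).intervalIntegrable 0 y
  rw [key]
  have hr : gfun ε M C (n+1) y - 4*ε
      = 4*ε * ∑ k ∈ Finset.range n, (C*y)^(k+1) / ((k+1).factorial : ℝ)
        + M * ((C*y)^(n+1) / ((n+1).factorial : ℝ)) := by
    unfold gfun
    rw [Finset.sum_range_succ']
    simp only [pow_zero, Nat.factorial_zero, Nat.cast_one]
    ring
  rw [hr, mul_add, Finset.mul_sum]
  rw [Finset.mul_sum]
  congr 1
  · rw [Finset.mul_sum]
    exact Finset.sum_congr rfl fun k _ => by rw [← mul_assoc, mul_comm C (4*ε), mul_assoc, hterm k]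
  · rw [← mul_assoc, mul_comm C M, mul_assoc, hterm n]

/-- stability estimates for the system in variations. -/
theorem stmt1
    (A T ε : ℝ) (hA : 0 < A) (hT : 0 < T) (hε : 0 < ε)
    (q : ℝ → ℝ) (ψ₁ : ℝ → ℝ → ℝ)
    (Δ : Set (ℝ × ℝ)) (hΔ : Δ = {p : ℝ × ℝ | 0 ≤ p.1 ∧ p.1 ≤ p.2 ∧ p.2 ≤ 2 * T - p.1})
    (hq : Continuous q) (hψ₁ : Continuous fun p : ℝ × ℝ => ψ₁ p.1 p.2)
    (hqA : ∀ y ∈ Icc (0:ℝ) T, |q y| ≤ A)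
    (hψ₁A : ∀ p ∈ Δ, |ψ₁ p.1 p.2| ≤ A)
    (ψt₁ ψt₂ : ℝ → ℝ → ℝ) (qt : ℝ → ℝ)
    (hψt₁ : Continuous fun p : ℝ × ℝ => ψt₁ p.1 p.2)
    (hψt₂ : Continuous fun p : ℝ × ℝ => ψt₂ p.1 p.2)
    (hqt : Continuous qt)
    (hineq₁ : ∀ p ∈ Δ, |ψt₁ p.1 p.2| ≤ ∫ η in (0:ℝ)..p.1, |ψt₂ η (p.2 + η - p.1)|)
    (hineq₂ : ∀ p ∈ Δ, |ψt₂ p.1 p.2| ≤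
      2 * A * (∫ η in (0:ℝ)..p.1, |ψt₁ η (p.2 - η + p.1)|)
        + A * (∫ η in (0:ℝ)..p.1, |qt η|) + ε)
    (hineq₃ : ∀ y ∈ Icc (0:ℝ) T, |qt y| ≤
      4 * A * (∫ η in (0:ℝ)..y, |qt η|)
        + 2 * A * (∫ η in (0:ℝ)..y, |ψt₁ η (2 * y - η)|) + 2 * ε) :
    (∀ y ∈ Icc (0:ℝ) T, |qt y| ≤ 6 * Real.exp (6 * A * max 1 (2 * T) * T) * ε) ∧
    (∀ p ∈ Δ, |ψt₂ p.1 p.2| ≤ 6 * Real.exp (6 * A * max 1 (2 * T) * T) * ε) ∧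
    (∀ p ∈ Δ, |ψt₁ p.1 p.2| ≤ 6 * T * Real.exp (6 * A * max 1 (2 * T) * T) * ε) := by
  set Cc : ℝ := 6 * A * max 1 (2 * T) with hCc
  have hmax1 : (1:ℝ) ≤ max 1 (2*T) := le_max_left _ _
  have hmax2 : 2*T ≤ max 1 (2*T) := le_max_right _ _
  have hCpos : 0 < Cc := by rw [hCc]; nlinarith
  -- membership facts
  have hΔ' : ∀ p ∈ Δ, 0 ≤ p.1 ∧ p.1 ≤ p.2 ∧ p.2 ≤ 2*T - p.1 := by
    intro p hp; rw [hΔ] at hp; exact hp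
  have hmemΔ : ∀ y t : ℝ, 0 ≤ y → y ≤ t → t ≤ 2*T - y → (y, t) ∈ Δ := by
    intro y t h1 h2 h3; rw [hΔ]; exact ⟨h1, h2, h3⟩
  have memT : ∀ p ∈ Δ, p.1 ∈ Icc (0:ℝ) T := by
    intro p hp; obtain ⟨h1, h2, h3⟩ := hΔ' p hp; exact ⟨h1, by linarith⟩
  have mem1 : ∀ p ∈ Δ, ∀ ξ ∈ Icc (0:ℝ) p.1, (ξ, p.2 + ξ - p.1) ∈ Δ := by
    intro p hp ξ hξ; obtain ⟨h1, h2, h3⟩ := hΔ' p hp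
    exact hmemΔ _ _ hξ.1 (by linarith [hξ.2]) (by linarith [hξ.1, hξ.2])
  have mem2 : ∀ p ∈ Δ, ∀ η ∈ Icc (0:ℝ) p.1, (η, p.2 - η + p.1) ∈ Δ := by
    intro p hp η hη; obtain ⟨h1, h2, h3⟩ := hΔ' p hp
    exact hmemΔ _ _ hη.1 (by linarith [hη.2]) (by linarith [hη.1, hη.2])
  have mem3 : ∀ y ∈ Icc (0:ℝ) T, ∀ η ∈ Icc (0:ℝ) y, (η, 2*y - η) ∈ Δ := by
    intro y hy η hη
    exact hmemΔ _ _ hη.1 (by linarith [hη.2]) (by linarith [hy.2])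
  -- global bound M
  have hΔcomp : IsCompact Δ := by
    apply IsCompact.of_isClosed_subset
      ((isCompact_Icc (a := (0:ℝ)) (b := T)).prod (isCompact_Icc (a := (0:ℝ)) (b := 2*T)))
    · rw [hΔ, setOf_and, setOf_and]
      exact (isClosed_le continuous_const continuous_fst).inter
        ((isClosed_le continuous_fst continuous_snd).inter
          (isClosed_le continuous_snd (continuous_const.sub continuous_fst)))
    · intro p hp; obtain ⟨h1, h2, h3⟩ := hΔ' p hp
      exact ⟨⟨h1, by linarith⟩, ⟨by linarith, by linarith⟩⟩
  obtain ⟨M₁, hM₁⟩ := (isCompact_Icc (a := (0:ℝ)) (b := T)).exists_bound_of_continuousOn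
    hqt.continuousOn
  obtain ⟨M₂, hM₂⟩ := hΔcomp.exists_bound_of_continuousOn hψt₂.continuousOn
  set M : ℝ := max (max M₁ (2*M₂)) 0 with hMdef
  have hM0 : 0 ≤ M := le_max_right _ _
  have hMq : ∀ y ∈ Icc (0:ℝ) T, |qt y| ≤ M := by
    intro y hy
    have := hM₁ y hy
    rw [Real.norm_eq_abs] at this
    exact this.trans (le_max_of_le_left (le_max_left _ _))
  have hMψ : ∀ p ∈ Δ, |ψt₂ p.1 p.2| ≤ M / 2 := by
    intro p hp
    have := hM₂ p hp
    rw [Real.norm_eq_abs] at this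
    have h2 : 2*M₂ ≤ M := le_max_of_le_left (le_max_right _ _)
    linarith
  -- main induction
  have main : ∀ n : ℕ, (∀ y ∈ Icc (0:ℝ) T, |qt y| ≤ gfun ε M Cc n y) ∧
      (∀ p ∈ Δ, |ψt₂ p.1 p.2| ≤ gfun ε M Cc n p.1 / 2) := by
    intro n
    induction n with
    | zero =>
      constructor
      · intro y hy; simpa [gfun] using hMq y hy
      · intro p hp; simpa [gfun] using hMψ p hp
    | succ n ih =>
      obtain ⟨ihq, ihψ⟩ := ih
      have hgcont := gcont ε M Cc
      have hgint : ∀ y : ℝ, ∫ ξ in (0:ℝ)..y, gfun ε M Cc n ξ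
          = (gfun ε M Cc (n+1) y - 4*ε) / Cc := by
        intro y; rw [eq_div_iff hCpos.ne', mul_comm]; exact gint ε M Cc n y
      -- step bound for ψt₁
      have hstep1 : ∀ p ∈ Δ, |ψt₁ p.1 p.2| ≤ (gfun ε M Cc (n+1) p.1 - 4*ε) / (2*Cc) := by
        intro p hp
        obtain ⟨hp1, hp2, hp3⟩ := hΔ' p hp
        calc |ψt₁ p.1 p.2| ≤ ∫ η in (0:ℝ)..p.1, |ψt₂ η (p.2 + η - p.1)| := hineq₁ p hp
          _ ≤ ∫ η in (0:ℝ)..p.1, gfun ε M Cc n η / 2 := by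
              apply intervalIntegral.integral_mono_on hp1
                ((by fun_prop : Continuous fun η : ℝ =>
                  |ψt₂ η (p.2 + η - p.1)|).intervalIntegrable 0 p.1)
                (((hgcont n).div_const 2).intervalIntegrable 0 p.1)
              intro ξ hξ
              simpa using ihψ (ξ, p.2 + ξ - p.1) (mem1 p hp ξ hξ)
          _ = (∫ η in (0:ℝ)..p.1, gfun ε M Cc n η) / 2 := intervalIntegral.integral_div 2 _
          _ = (gfun ε M Cc (n+1) p.1 - 4*ε) / (2*Cc) := by rw [hgint]; ring
      constructor
      · intro y hy
        obtain ⟨hy0, hyT⟩ := hy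
        set E : ℝ := (gfun ε M Cc (n+1) y - 4*ε) / Cc with hEdef
        have hD0 : 0 ≤ gfun ε M Cc (n+1) y - 4*ε := by
          have := gfour ε M Cc hε.le hM0 hCpos.le n y hy0; linarith
        have hE0 : 0 ≤ E := div_nonneg hD0 hCpos.le
        have hDE : gfun ε M Cc (n+1) y = Cc * E + 4*ε := by
          rw [hEdef]; field_simp; ring
        have hint_q : ∫ η in (0:ℝ)..y, |qt η| ≤ E := by
          rw [hEdef, ← hgint y]
          apply intervalIntegral.integral_mono_on hy0
            (hqt.abs.intervalIntegrable 0 y) ((hgcont n).intervalIntegrable 0 y)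
          intro η hη
          exact ihq η ⟨hη.1, hη.2.trans hyT⟩
        have hint_ψ : ∫ η in (0:ℝ)..y, |ψt₁ η (2*y - η)| ≤ y * (E/2) := by
          have hmono : ∀ η ∈ Icc (0:ℝ) y, |ψt₁ η (2*y - η)|
              ≤ (gfun ε M Cc (n+1) y - 4*ε) / (2*Cc) := by
            intro η hη
            have h1 := hstep1 (η, 2*y - η) (mem3 y ⟨hy0, hyT⟩ η hη)
            have h2 : gfun ε M Cc (n+1) η ≤ gfun ε M Cc (n+1) y :=
              gmono ε M Cc hε.le hM0 hCpos.le (n+1) η y hη.1 hη.2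
            simp only at h1
            have h3 : (gfun ε M Cc (n+1) η - 4*ε) / (2*Cc)
                ≤ (gfun ε M Cc (n+1) y - 4*ε) / (2*Cc) := by
              gcongr <;> linarith
            linarith
          calc ∫ η in (0:ℝ)..y, |ψt₁ η (2*y - η)|
              ≤ ∫ _η in (0:ℝ)..y, (gfun ε M Cc (n+1) y - 4*ε) / (2*Cc) := by
                apply intervalIntegral.integral_mono_on hy0
                  ((by fun_prop : Continuous fun η : ℝ =>
                    |ψt₁ η (2*y - η)|).intervalIntegrable 0 y)
                  (intervalIntegrable_const) hmono
            _ = y * (E/2) := by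
                rw [intervalIntegral.integral_const, smul_eq_mul, hEdef]; ring
        have hcoef : 4*A + A*y ≤ Cc := by rw [hCc]; nlinarith
        have hbound := hineq₃ y ⟨hy0, hyT⟩
        have m1 : 4*A*(∫ η in (0:ℝ)..y, |qt η|) ≤ 4*A*E :=
          mul_le_mul_of_nonneg_left hint_q (by positivity)
        have m2 : 2*A*(∫ η in (0:ℝ)..y, |ψt₁ η (2*y - η)|) ≤ 2*A*(y*(E/2)) :=
          mul_le_mul_of_nonneg_left hint_ψ (by positivity)
        have harith : 4*A*E + 2*A*(y*(E/2)) + 2*ε ≤ Cc*E + 4*ε := by nlinarith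
        rw [hDE] at *
        linarith
      · intro p hp
        obtain ⟨hp1, hp2, hp3⟩ := hΔ' p hp
        have hpT : p.1 ≤ T := by linarith
        set E : ℝ := (gfun ε M Cc (n+1) p.1 - 4*ε) / Cc with hEdef
        have hD0 : 0 ≤ gfun ε M Cc (n+1) p.1 - 4*ε := by
          have := gfour ε M Cc hε.le hM0 hCpos.le n p.1 hp1; linarith
        have hE0 : 0 ≤ E := div_nonneg hD0 hCpos.le
        have hDE : gfun ε M Cc (n+1) p.1 = Cc * E + 4*ε := by
          rw [hEdef]; field_simp; ring
        have hint_q : ∫ η in (0:ℝ)..p.1, |qt η| ≤ E := by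
          rw [hEdef, ← hgint p.1]
          apply intervalIntegral.integral_mono_on hp1
            (hqt.abs.intervalIntegrable 0 p.1) ((hgcont n).intervalIntegrable 0 p.1)
          intro η hη
          exact ihq η ⟨hη.1, hη.2.trans hpT⟩
        have hint_ψ : ∫ η in (0:ℝ)..p.1, |ψt₁ η (p.2 - η + p.1)| ≤ p.1 * (E/2) := by
          have hmono : ∀ η ∈ Icc (0:ℝ) p.1, |ψt₁ η (p.2 - η + p.1)|
              ≤ (gfun ε M Cc (n+1) p.1 - 4*ε) / (2*Cc) := by
            intro η hη
            have h1 := hstep1 (η, p.2 - η + p.1) (mem2 p hp η hη)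
            have h2 : gfun ε M Cc (n+1) η ≤ gfun ε M Cc (n+1) p.1 :=
              gmono ε M Cc hε.le hM0 hCpos.le (n+1) η p.1 hη.1 hη.2
            simp only at h1
            have h3 : (gfun ε M Cc (n+1) η - 4*ε) / (2*Cc)
                ≤ (gfun ε M Cc (n+1) p.1 - 4*ε) / (2*Cc) := by
              gcongr <;> linarith
            linarith
          calc ∫ η in (0:ℝ)..p.1, |ψt₁ η (p.2 - η + p.1)|
              ≤ ∫ _η in (0:ℝ)..p.1, (gfun ε M Cc (n+1) p.1 - 4*ε) / (2*Cc) := by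
                apply intervalIntegral.integral_mono_on hp1
                  ((by fun_prop : Continuous fun η : ℝ =>
                    |ψt₁ η (p.2 - η + p.1)|).intervalIntegrable 0 p.1)
                  (intervalIntegrable_const) hmono
            _ = p.1 * (E/2) := by
                rw [intervalIntegral.integral_const, smul_eq_mul, hEdef]; ring
        have hcoef : 2*A*(p.1 + 1) ≤ Cc := by rw [hCc]; nlinarith
        have hbound := hineq₂ p hp
        have m1 : A*(∫ η in (0:ℝ)..p.1, |qt η|) ≤ A*E :=
          mul_le_mul_of_nonneg_left hint_q hA.le
        have m2 : 2*A*(∫ η in (0:ℝ)..p.1, |ψt₁ η (p.2 - η + p.1)|) ≤ 2*A*(p.1*(E/2)) :=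
          mul_le_mul_of_nonneg_left hint_ψ (by positivity)
        have harith : 2*A*(p.1*(E/2)) + A*E + ε ≤ (Cc*E + 4*ε)/2 := by nlinarith
        rw [hDE] at *
        linarith
  -- pass to the limit
  have hexp_pos := Real.exp_pos (Cc*T)
  have hlimit : ∀ y : ℝ, 0 ≤ y → y ≤ T → (∀ n : ℕ, ∃ b : ℝ, b = gfun ε M Cc n y) → True := fun _ _ _ _ => trivial
  have hfq : ∀ y ∈ Icc (0:ℝ) T, |qt y| ≤ 4*ε*Real.exp (Cc*T) := by
    intro y hy
    have hx : 0 ≤ Cc*y := mul_nonneg hCpos.le hy.1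
    have hlim : Filter.Tendsto (fun n : ℕ => 4*ε*Real.exp (Cc*y) + M*((Cc*y)^n / (n.factorial:ℝ)))
        Filter.atTop (nhds (4*ε*Real.exp (Cc*y))) := by
      have h := (FloorSemiring.tendsto_pow_div_factorial_atTop (Cc*y)).const_mul M
      have := Filter.Tendsto.const_add (4*ε*Real.exp (Cc*y)) h
      simpa using this
    have hle : ∀ n : ℕ, |qt y| ≤ 4*ε*Real.exp (Cc*y) + M*((Cc*y)^n / (n.factorial:ℝ)) := by
      intro n
      have h1 := (main n).1 y hy
      have hs := Real.sum_le_exp_of_nonneg hx n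
      have h2 : gfun ε M Cc n y ≤ 4*ε*Real.exp (Cc*y) + M*((Cc*y)^n / (n.factorial:ℝ)) := by
        unfold gfun
        have := mul_le_mul_of_nonneg_left hs (by positivity : (0:ℝ) ≤ 4*ε)
        have heq : M * (Cc*y)^n / (n.factorial:ℝ) = M*((Cc*y)^n / (n.factorial:ℝ)) := by ring
        linarith [heq.le]
      linarith
    have hh := ge_of_tendsto' hlim hle
    have : Real.exp (Cc*y) ≤ Real.exp (Cc*T) :=
      Real.exp_le_exp.mpr (mul_le_mul_of_nonneg_left hy.2 hCpos.le)
    nlinarith [Real.exp_pos (Cc*y)]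
  have hfψ : ∀ p ∈ Δ, |ψt₂ p.1 p.2| ≤ 2*ε*Real.exp (Cc*T) := by
    intro p hp
    have hyT := memT p hp
    have hx : 0 ≤ Cc*p.1 := mul_nonneg hCpos.le hyT.1
    have hlim : Filter.Tendsto (fun n : ℕ => 2*ε*Real.exp (Cc*p.1) + M*((Cc*p.1)^n / (n.factorial:ℝ)))
        Filter.atTop (nhds (2*ε*Real.exp (Cc*p.1))) := by
      have h := (FloorSemiring.tendsto_pow_div_factorial_atTop (Cc*p.1)).const_mul M
      have := Filter.Tendsto.const_add (2*ε*Real.exp (Cc*p.1)) h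
      simpa using this
    have hle : ∀ n : ℕ, |ψt₂ p.1 p.2| ≤ 2*ε*Real.exp (Cc*p.1) + M*((Cc*p.1)^n / (n.factorial:ℝ)) := by
      intro n
      have h1 := (main n).2 p hp
      have hs := Real.sum_le_exp_of_nonneg hx n
      have h2 : gfun ε M Cc n p.1 / 2
          ≤ 2*ε*Real.exp (Cc*p.1) + M*((Cc*p.1)^n / (n.factorial:ℝ)) := by
        unfold gfun
        have := mul_le_mul_of_nonneg_left hs (by positivity : (0:ℝ) ≤ 4*ε)
        have hM2 : 0 ≤ M*((Cc*p.1)^n / (n.factorial:ℝ)) := by positivity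
        have heq : M * (Cc*p.1)^n / (n.factorial:ℝ) = M*((Cc*p.1)^n / (n.factorial:ℝ)) := by ring
        nlinarith [heq.le, heq.ge]
      linarith
    have hh := ge_of_tendsto' hlim hle
    have : Real.exp (Cc*p.1) ≤ Real.exp (Cc*T) :=
      Real.exp_le_exp.mpr (mul_le_mul_of_nonneg_left hyT.2 hCpos.le)
    nlinarith [Real.exp_pos (Cc*p.1)]
  refine ⟨fun y hy => ?_, fun p hp => ?_, fun p hp => ?_⟩
  · have := hfq y hy; nlinarith
  · have := hfψ p hp; nlinarith
  · obtain ⟨hp1, hp2, hp3⟩ := hΔ' p hp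
    have hpT : p.1 ≤ T := by linarith
    calc |ψt₁ p.1 p.2| ≤ ∫ η in (0:ℝ)..p.1, |ψt₂ η (p.2 + η - p.1)| := hineq₁ p hp
      _ ≤ ∫ _η in (0:ℝ)..p.1, 2*ε*Real.exp (Cc*T) := by
          apply intervalIntegral.integral_mono_on hp1
            ((by fun_prop : Continuous fun η : ℝ =>
              |ψt₂ η (p.2 + η - p.1)|).intervalIntegrable 0 p.1)
            (intervalIntegrable_const)
          intro ξ hξ
          simpa using hfψ (ξ, p.2 + ξ - p.1) (mem1 p hp ξ hξ)
      _ = p.1 * (2*ε*Real.exp (Cc*T)) := by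
          rw [intervalIntegral.integral_const, smul_eq_mul]; ring
      _ ≤ 6 * T * Real.exp (Cc*T) * ε := by
          have h := mul_le_mul_of_nonneg_right hpT
            (by positivity : (0:ℝ) ≤ 2*ε*Real.exp (Cc*T))
          nlinarith [mul_pos (mul_pos hT hε) hexp_pos]
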